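/- Let D be a central division algebra over a field F with a valuation w extending a valuation v on F, such that D̄ is a field with [D̄ : F̄] = [Γ_D : Γ_F] and D̄/F̄ is a simple field extension generated by an element s̄. If s ∈ D is any lift of a primitive element s̄ and z ∈ D is any element whose value generates Γ_D over Γ_F, then [F(s) : F] ≥ [D̄ : F̄] and [F(z) : F] ≥ [Γ_D : Γ_F]; consequently, if [D : F] = [D̄ : F̄] · [Γ_D : Γ_F] and both indices equal p, then F(s) is a maximal subfield of D. -/

import Mathlib

open Module

open Module

private lemma aux_two_equal {D : Type*} [DivisionRing D]
    (w : Valuation D (WithZero (Multiplicative ℤ))) {n : ℕ} {t : Fin n → D}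
    (hsum : ∑ i, t i = 0) {j0 : Fin n} (hj0 : t j0 ≠ 0) :
    ∃ i j, i ≠ j ∧ t i ≠ 0 ∧ t j ≠ 0 ∧ w (t i) = w (t j) := by
  letI := Classical.propDecidable
  set S : Finset (Fin n) := Finset.univ.filter (fun i => t i ≠ 0) with hS
  have hj0S : j0 ∈ S := by simp [hS, hj0]
  obtain ⟨j, hjS, hmax⟩ := S.exists_max_image (fun i => w (t i)) ⟨j0, hj0S⟩
  by_contra hcon
  push_neg at hcon
  have hlt : ∀ i ∈ S \ {j}, w (t i) < w (t j) := by
    intro i hi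
    rw [Finset.mem_sdiff, Finset.mem_singleton] at hi
    rcases hi with ⟨hiS, hij⟩
    refine lt_of_le_of_ne (hmax i hiS) ?_
    exact hcon i j hij (by simpa [hS] using hiS) (by simpa [hS] using hjS)
  have hSsum : ∑ i ∈ S, t i = 0 := by
    rw [← hsum, hS]
    exact Finset.sum_filter_ne_zero _
  have h0 : w (t j) ≠ 0 := by
    rw [Ne, Valuation.zero_iff]
    simpa [hS] using hjS
  have := w.map_sum_eq_of_lt hjS hlt
  rw [hSsum, map_zero] at this
  exact h0 this.symm

private lemma aux_order {ΓD ΓF : Subgroup (Multiplicative ℤ)} (hFD : ΓF ≤ ΓD)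
    {γz : Multiplicative ℤ} (hγz : γz ∈ ΓD)
    (hgen : ΓD ≤ Subgroup.closure (insert γz (ΓF : Set (Multiplicative ℤ))))
    {e : ℕ} (he : e = ΓF.relIndex ΓD)
    {m : ℤ} (hm : γz ^ m ∈ ΓF) (hm0 : m ≠ 0) : (e : ℤ) ≤ |m| := by
  set H := ΓF.subgroupOf ΓD with hH
  set q : ΓD ⧸ H := QuotientGroup.mk ⟨γz, hγz⟩ with hq
  have hcl : ΓD ≤ Subgroup.zpowers γz ⊔ ΓF := by
    rw [Subgroup.zpowers_eq_closure, ← Subgroup.closure_eq ΓF, ← Subgroup.closure_union,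
      ← Set.insert_eq]
    exact hgen
  have hqall : ∀ x : ΓD, ∃ n : ℤ, q ^ n = QuotientGroup.mk x := by
    intro x
    obtain ⟨y, hy, zf, hzf, hyz⟩ := Subgroup.mem_sup.mp (hcl x.2)
    obtain ⟨n, rfl⟩ := Subgroup.mem_zpowers_iff.mp hy
    refine ⟨n, ?_⟩
    have hx : x = ⟨γz, hγz⟩ ^ n * ⟨zf, hFD hzf⟩ := by
      ext
      push_cast
      exact hyz.symm
    rw [hx, QuotientGroup.mk_mul, ← QuotientGroup.mk_zpow]
    have h1 : (QuotientGroup.mk ⟨zf, hFD hzf⟩ : ΓD ⧸ H) = 1 := by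
      rw [QuotientGroup.eq_one_iff, hH, Subgroup.mem_subgroupOf]
      exact hzf
    rw [h1, mul_one]
  have htop : Subgroup.zpowers q = ⊤ := by
    rw [eq_top_iff]
    rintro x -
    induction x using QuotientGroup.induction_on with
    | H x =>
      obtain ⟨n, hn⟩ := hqall x
      exact ⟨n, hn⟩
  have horder : orderOf q = e := by
    rw [← Nat.card_zpowers q, htop, he, Subgroup.relIndex, Subgroup.index]
    exact Nat.card_congr Subgroup.topEquiv.toEquiv
  have hqm : q ^ m = 1 := by
    rw [hq, ← QuotientGroup.mk_zpow, QuotientGroup.eq_one_iff, hH, Subgroup.mem_subgroupOf]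
    simpa using hm
  have hdvd : (e : ℤ) ∣ m := by
    rw [← horder]
    exact orderOf_dvd_iff_zpow_eq_one.mpr hqm
  exact Int.le_of_dvd (abs_pos.mpr hm0) ((dvd_abs _ _).mpr hdvd)

private lemma aux_fd {F D : Type*} [Field F] [DivisionRing D] [Algebra F D]
    [FiniteDimensional F D] (A : Subalgebra F D) : FiniteDimensional F A :=
  FiniteDimensional.of_injective A.val.toLinearMap Subtype.val_injective

private lemma aux_finrank_adjoin {F D : Type*} [Field F] [DivisionRing D] [Algebra F D]
    [FiniteDimensional F D] {n : ℕ} {x : D}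
    (h : LinearIndependent F (fun i : Fin n => x ^ (i : ℕ))) :
    n ≤ Module.finrank F (Algebra.adjoin F {x}) := by
  set A : Subalgebra F D := Algebra.adjoin F {x} with hA
  haveI hfd : FiniteDimensional F A := aux_fd A
  have hmem : ∀ i : Fin n, x ^ (i : ℕ) ∈ A := fun i => pow_mem (Algebra.self_mem_adjoin_singleton F x) _
  have h' : LinearIndependent F (fun i : Fin n => (⟨x ^ (i : ℕ), hmem i⟩ : A)) := by
    apply LinearIndependent.of_comp A.val.toLinearMap
    exact h
  have := h'.fintype_card_le_finrank
  rwa [Fintype.card_fin] at this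

/-- Degree bounds for subfields generated by a lift of a primitive residue
element and by a parameter, and maximality of F(s) when [D:F] = p². -/
theorem stmt_8 {F D : Type*} [Field F] [DivisionRing D] [Algebra F D]
    [FiniteDimensional F D]
    (hcentral : ∀ x : D, (∀ y : D, x * y = y * x) ↔ x ∈ (algebraMap F D).range)
    (w : Valuation D (WithZero (Multiplicative ℤ)))
    (ΓD ΓF : Subgroup (Multiplicative ℤ))
    (hΓD : ∀ γ : Multiplicative ℤ,
      γ ∈ ΓD ↔ ∃ x : D, x ≠ 0 ∧ w x = (γ : WithZero (Multiplicative ℤ)))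
    (hΓF : ∀ γ : Multiplicative ℤ,
      γ ∈ ΓF ↔ ∃ a : F, a ≠ 0 ∧ w (algebraMap F D a) = (γ : WithZero (Multiplicative ℤ)))
    (Dbar : Type*) [Field Dbar]
    (π : w.integer →+* Dbar) (hπ : Function.Surjective π)
    (hπker : ∀ x : w.integer, π x = 0 ↔ w (x : D) < 1)
    (kbar : Type*) [Field kbar]
    (πF : (w.comap (algebraMap F D)).integer →+* kbar)
    (hπF : Function.Surjective πF)
    (hπFker : ∀ a : (w.comap (algebraMap F D)).integer,
      πF a = 0 ↔ w (algebraMap F D (a : F)) < 1)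
    (ι : kbar →+* Dbar)
    (hcompat : ∀ (a : F) (ha : a ∈ (w.comap (algebraMap F D)).integer)
      (hb : algebraMap F D a ∈ w.integer),
      ι (πF ⟨a, ha⟩) = π ⟨algebraMap F D a, hb⟩)
    (e f : ℕ) (he : e = ΓF.relIndex ΓD)
    (hf : f = @Module.finrank kbar Dbar _ _ ι.toModule)
    (hfe : f = e)
    (sbar : Dbar) (hsbar : Subfield.closure (Set.range ι ∪ {sbar}) = ⊤)
    (s : D) (hs : s ∈ w.integer) (hslift : π ⟨s, hs⟩ = sbar)
    (z : D) (hz : z ≠ 0) (γz : Multiplicative ℤ)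
    (hwz : w z = (γz : WithZero (Multiplicative ℤ)))
    (hgen : ΓD ≤ Subgroup.closure (insert γz (ΓF : Set (Multiplicative ℤ)))) :
    f ≤ Module.finrank F (Algebra.adjoin F {s}) ∧
    e ≤ Module.finrank F (Algebra.adjoin F {z}) ∧
    (∀ p : ℕ, p.Prime → Module.finrank F D = f * e → f = p → e = p →
      Subalgebra.centralizer F ((Algebra.adjoin F {s} : Subalgebra F D) : Set D)
        = Algebra.adjoin F {s}) := by
  have halg_ne : ∀ a : F, a ≠ 0 → algebraMap F D a ≠ 0 := fun a ha =>
    ((isUnit_iff_ne_zero.mpr ha).map (algebraMap F D)).ne_zero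
  have hFD : ΓF ≤ ΓD := by
    intro γ hγ
    obtain ⟨a, ha, hwa⟩ := (hΓF γ).mp hγ
    exact (hΓD γ).mpr ⟨algebraMap F D a, halg_ne a ha, hwa⟩
  have hγzD : γz ∈ ΓD := (hΓD γz).mpr ⟨z, hz, hwz⟩
  -- Part 2
  have h2 : e ≤ Module.finrank F (Algebra.adjoin F {z}) := by
    have hli : LinearIndependent F (fun i : Fin e => z ^ (i : ℕ)) := by
      rw [Fintype.linearIndependent_iff]
      intro g hg
      by_contra hng
      push_neg at hng
      obtain ⟨j0, hj0⟩ := hng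
      have hsum : ∑ i : Fin e, algebraMap F D (g i) * z ^ (i : ℕ) = 0 := by
        simpa [Algebra.smul_def] using hg
      have hterm : ∀ i : Fin e, g i ≠ 0 → algebraMap F D (g i) * z ^ (i : ℕ) ≠ 0 :=
        fun i hi => mul_ne_zero (halg_ne _ hi) (pow_ne_zero _ hz)
      obtain ⟨i, j, hij, hti, htj, hwij⟩ := aux_two_equal w hsum (hterm j0 hj0)
      have hgi : g i ≠ 0 := fun h => hti (by simp [h])
      have hgj : g j ≠ 0 := fun h => htj (by simp [h])
      obtain ⟨αi, hαi⟩ := WithZero.ne_zero_iff_exists.mp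
        ((w.zero_iff.not.mpr (halg_ne _ hgi)))
      obtain ⟨αj, hαj⟩ := WithZero.ne_zero_iff_exists.mp
        ((w.zero_iff.not.mpr (halg_ne _ hgj)))
      have hαiF : αi ∈ ΓF := (hΓF αi).mpr ⟨g i, hgi, hαi.symm⟩
      have hαjF : αj ∈ ΓF := (hΓF αj).mpr ⟨g j, hgj, hαj.symm⟩
      have heq : αi * γz ^ (i : ℕ) = αj * γz ^ (j : ℕ) := by
        have h' := hwij
        rw [map_mul, map_mul, map_pow, map_pow, ← hαi, ← hαj, hwz] at h'
        exact_mod_cast h'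
      set m : ℤ := (i : ℕ) - (j : ℕ) with hm
      have h2' : γz ^ (i : ℕ) = αi⁻¹ * (αj * γz ^ (j : ℕ)) := by
        rw [← heq, ← mul_assoc, inv_mul_cancel, one_mul]
      have hmF : γz ^ m ∈ ΓF := by
        have hval : γz ^ m = αi⁻¹ * αj := by
          rw [hm, zpow_sub, zpow_natCast, zpow_natCast, h2']
          group
        rw [hval]
        exact mul_mem (inv_mem hαiF) hαjF
      have hm0 : m ≠ 0 := by
        rw [hm]
        intro hc
        apply hij
        have : (i : ℕ) = (j : ℕ) := by omega
        exact Fin.ext this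
      have hge := aux_order hFD hγzD hgen he hmF hm0
      have hlt : |m| < (e : ℤ) := by
        rw [abs_lt]
        constructor <;>
          · have h1 := i.isLt
            have h2 := j.isLt
            omega
      omega
    exact aux_finrank_adjoin hli

  -- Part 1
  have h1 : f ≤ Module.finrank F (Algebra.adjoin F {s}) := by
    rcases Nat.eq_zero_or_pos f with hf0 | hfpos
    · rw [hf0]; exact Nat.zero_le _
    refine aux_finrank_adjoin ?_
    letI : Algebra kbar Dbar := ι.toAlgebra
    have hfr : Module.finrank kbar Dbar = f := hf.symm
    haveI : FiniteDimensional kbar Dbar := FiniteDimensional.of_finrank_pos (hfr ▸ hfpos)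
    have hint : IsIntegral kbar sbar := IsIntegral.of_finite kbar sbar
    have htop : IntermediateField.adjoin kbar {sbar} = ⊤ := by
      apply IntermediateField.toSubfield_injective
      rw [IntermediateField.adjoin_toSubfield]
      have hrange : Set.range (algebraMap kbar Dbar) = Set.range ι := by
        rw [RingHom.algebraMap_toAlgebra]
      rw [hrange, hsbar]
      rfl
    have hdeg : (minpoly kbar sbar).natDegree = f := by
      rw [← IntermediateField.adjoin.finrank hint, htop, IntermediateField.finrank_top', hfr]
    have hlib : LinearIndependent kbar (fun i : Fin f => sbar ^ (i : ℕ)) := by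
      have h' := linearIndependent_pow (K := kbar) sbar
      rwa [hdeg] at h'
    rw [Fintype.linearIndependent_iff]
    intro g hg
    by_contra hng
    push_neg at hng
    obtain ⟨j0, hj0⟩ := hng
    letI := Classical.propDecidable
    set S : Finset (Fin f) := Finset.univ.filter (fun i => g i ≠ 0) with hS
    obtain ⟨j, hjS, hmax⟩ := S.exists_max_image (fun i => w (algebraMap F D (g i)))
      ⟨j0, by simp [hS, hj0]⟩
    have hgj : g j ≠ 0 := by simpa [hS] using hjS
    set c : Fin f → F := fun i => g i * (g j)⁻¹ with hc
    have hwc : ∀ i, w (algebraMap F D (c i)) ≤ 1 := by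
      intro i
      rcases eq_or_ne (g i) 0 with h0 | h0
      · simp [hc, h0]
      · have hiS : i ∈ S := by simp [hS, h0]
        have hle := hmax i hiS
        have hwgj : w (algebraMap F D (g j)) ≠ 0 := w.zero_iff.not.mpr (halg_ne _ hgj)
        calc w (algebraMap F D (c i))
            = w (algebraMap F D (g i)) * (w (algebraMap F D (g j)))⁻¹ := by
              rw [hc]; simp [map_mul, map_inv₀]
          _ ≤ w (algebraMap F D (g j)) * (w (algebraMap F D (g j)))⁻¹ :=
              mul_le_mul_left hle _
          _ = 1 := mul_inv_cancel₀ hwgj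
    have hci : ∀ i, algebraMap F D (c i) ∈ w.integer := fun i => hwc i
    have hci' : ∀ i, c i ∈ (w.comap (algebraMap F D)).integer := fun i => hwc i
    have hsum0 : ∑ i : Fin f, algebraMap F D (g i) * s ^ (i : ℕ) = 0 := by
      simpa [Algebra.smul_def] using hg
    have hcomm : ∀ y : D, algebraMap F D (g j)⁻¹ * y = y * algebraMap F D (g j)⁻¹ :=
      fun y => (hcentral _).mpr ⟨(g j)⁻¹, rfl⟩ y
    have hsumc : ∑ i : Fin f, algebraMap F D (c i) * s ^ (i : ℕ) = 0 := by
      have : ∀ i : Fin f, algebraMap F D (c i) * s ^ (i : ℕ)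
          = (algebraMap F D (g i) * s ^ (i : ℕ)) * algebraMap F D (g j)⁻¹ := by
        intro i
        rw [hc]
        simp only [map_mul]
        rw [mul_assoc, hcomm (s ^ (i : ℕ)), mul_assoc]
      rw [Finset.sum_congr rfl (fun i _ => this i), ← Finset.sum_mul, hsum0, zero_mul]
    set U : Fin f → w.integer :=
      fun i => ⟨algebraMap F D (c i), hci i⟩ * (⟨s, hs⟩ : w.integer) ^ (i : ℕ) with hU
    have hUsum : ∑ i, U i = 0 := by
      apply Subtype.ext
      push_cast
      simpa [hU] using hsumc
    have hDbar : ∑ i : Fin f, ι (πF ⟨c i, hci' i⟩) * sbar ^ (i : ℕ) = 0 := by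
      have h0 : π (∑ i, U i) = 0 := by rw [hUsum, map_zero]
      rw [map_sum] at h0
      rw [← h0]
      refine Finset.sum_congr rfl fun i _ => ?_
      rw [hU]
      simp only [map_mul, map_pow]
      rw [hslift, hcompat (c i) (hci' i) (hci i)]
    have hsmul : ∑ i : Fin f, (πF ⟨c i, hci' i⟩) • sbar ^ (i : ℕ) = 0 := by
      have halgk : ∀ a : kbar, ∀ x : Dbar, a • x = ι a * x := fun a x => rfl
      simpa only [halgk] using hDbar
    have hzero := Fintype.linearIndependent_iff.mp hlib _ hsmul j
    have hcj : (⟨c j, hci' j⟩ : (w.comap (algebraMap F D)).integer) = 1 := by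
      ext
      show c j = 1
      rw [hc]
      exact mul_inv_cancel₀ hgj
    rw [hcj, map_one] at hzero
    exact one_ne_zero hzero
  refine ⟨h1, h2, ?_⟩
  intro p hp hD hfp hep
  set A : Subalgebra F D := Algebra.adjoin F {s} with hA
  set C : Subalgebra F D := Subalgebra.centralizer F (A : Set D) with hC
  haveI hfdA : FiniteDimensional F A := aux_fd A
  haveI hfdC : FiniteDimensional F C := aux_fd C
  have hAs : A ≤ Subalgebra.centralizer F ({s} : Set D) := by
    rw [hA]
    apply Algebra.adjoin_le
    rw [Set.singleton_subset_iff, SetLike.mem_coe, Subalgebra.mem_centralizer_iff]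
    intro g hg
    rw [Set.mem_singleton_iff] at hg
    subst hg
    rfl
  have hAC : A ≤ C := by
    intro x hx
    rw [hC, Subalgebra.mem_centralizer_iff]
    intro y hy
    have hsy : s * y = y * s := ((Subalgebra.mem_centralizer_iff (R := F)).mp (hAs hy)) s rfl
    have hAy : A ≤ Subalgebra.centralizer F ({y} : Set D) := by
      rw [hA]
      apply Algebra.adjoin_le
      rw [Set.singleton_subset_iff, SetLike.mem_coe, Subalgebra.mem_centralizer_iff]
      intro g hg
      rw [Set.mem_singleton_iff] at hg
      subst hg
      exact hsy.symm
    exact ((Subalgebra.mem_centralizer_iff (R := F)).mp (hAy hx)) y rfl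
  -- dimensions
  have hpA : p ≤ Module.finrank F A := by rw [← hfp]; exact h1
  have hAleC : Module.finrank F A ≤ Module.finrank F C :=
    Submodule.finrank_mono (by exact hAC : Subalgebra.toSubmodule A ≤ Subalgebra.toSubmodule C)
  -- C is a division ring and D a C-module
  haveI : IsDomain C := Function.Injective.isDomain C.val.toRingHom Subtype.val_injective
  letI : DivisionRing C := divisionRingOfFiniteDimensional F C
  letI : Module C D := Module.compHom D (C.val.toRingHom : C →+* D)
  haveI : IsScalarTower F C D := by
    constructor
    intro a c d
    show ((a • c : C) : D) * d = a • ((c : D) * d)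
    rw [SetLike.val_smul, Algebra.smul_def, Algebra.smul_def, mul_assoc]
  have htower := @Module.finrank_mul_finrank F C D _ _ _ _ _ _ this _ _ _ _
  have hdvd : Module.finrank F C ∣ p ^ 2 := by
    refine Dvd.intro (Module.finrank C D) ?_
    rw [htower, hD, hfp, hep, sq]
  obtain ⟨k, hk2, hkeq⟩ := (Nat.dvd_prime_pow hp).mp hdvd
  have hp2 : 2 ≤ p := hp.two_le
  interval_cases k
  · -- finrank C = 1
    exfalso
    rw [pow_zero] at hkeq
    omega
  · -- finrank C = p : A = C
    rw [pow_one] at hkeq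
    have hsub : Subalgebra.toSubmodule A = Subalgebra.toSubmodule C :=
      Submodule.eq_of_le_of_finrank_le (by exact hAC)
        (by rw [Subalgebra.finrank_toSubmodule, Subalgebra.finrank_toSubmodule]; omega)
    exact (Subalgebra.toSubmodule_injective hsub).symm
  · -- finrank C = p ^ 2 : C = ⊤, contradiction
    exfalso
    have hCtop : C = ⊤ := by
      rw [← Algebra.toSubmodule_eq_top]
      apply Submodule.eq_top_of_finrank_eq
      rw [(by rfl : Module.finrank F (Subalgebra.toSubmodule C) = Module.finrank F C), hkeq,
        hD, hfp, hep, sq]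
    have hAbot : A ≤ ⊥ := by
      intro x hx
      rw [Algebra.mem_bot]
      have hcomm : ∀ y : D, x * y = y * x := by
        intro y
        have hyC : y ∈ C := by rw [hCtop]; trivial
        exact ((Subalgebra.mem_centralizer_iff (R := F)).mp hyC) x hx
      exact (hcentral x).mp hcomm
    have : Module.finrank F A ≤ 1 := by
      have := Submodule.finrank_mono
        (by exact hAbot : Subalgebra.toSubmodule A ≤ Subalgebra.toSubmodule (⊥ : Subalgebra F D))
      rw [(by rfl : Module.finrank F (Subalgebra.toSubmodule (⊥ : Subalgebra F D))
        = Module.finrank F (⊥ : Subalgebra F D)), Subalgebra.finrank_bot] at this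
      exact this
    omega
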